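/- arXiv:1503.01585 — 2 statements merged into one kernel-verified Lean document; each statement's English description precedes it below -/
import Mathlib

section
/- Let 𝔸_V = (A, V, ψ_V, σ_V) and 𝔸_W = (A, W, ψ_W, σ_W) be two quadruples with common monoid A and let Δ : V⊗W → V⊗W be a link morphism between them. Then the morphism ∇_{A⊗V⊗W} = (μ_A⊗V⊗W)∘(A⊗ψ_{V⊗W})∘(A⊗V⊗W⊗η_A) is idempotent, and ψ_{V⊗W} = ∇_{A⊗V⊗W}∘ψ_{V⊗W}. -/
open CategoryTheory MonoidalCategory

namespace IteratedWCP

universe v u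

variable {C : Type u} [Category.{v} C] [MonoidalCategory C]

/-- The monoid (algebra) axioms for `(A, η, μ)`. -/
def IsMonoid {A : C} (η : 𝟙_ C ⟶ A) (μ : A ⊗ A ⟶ A) : Prop :=
  (η ▷ A) ≫ μ = (λ_ A).hom ∧ (A ◁ η) ≫ μ = (ρ_ A).hom ∧
    (μ ▷ A) ≫ μ = (α_ A A A).hom ≫ (A ◁ μ) ≫ μ

/-- The compatibility condition
`(μ_A ⊗ V) ∘ (A ⊗ ψ) ∘ (ψ ⊗ A) = ψ ∘ (V ⊗ μ_A)`. -/
def Compat {A V : C} (μ : A ⊗ A ⟶ A) (ψ : V ⊗ A ⟶ A ⊗ V) : Prop :=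
  (ψ ▷ A) ≫ (α_ A V A).hom ≫ (A ◁ ψ) ≫ (α_ A A V).inv ≫ (μ ▷ V)
    = (α_ V A A).hom ≫ (V ◁ μ) ≫ ψ

/-- The idempotent `∇_{A⊗V} = (μ_A ⊗ V) ∘ (A ⊗ ψ) ∘ (A ⊗ V ⊗ η_A)`. -/
def nabla {A V : C} (η : 𝟙_ C ⟶ A) (μ : A ⊗ A ⟶ A) (ψ : V ⊗ A ⟶ A ⊗ V) :
    A ⊗ V ⟶ A ⊗ V :=
  (ρ_ (A ⊗ V)).inv ≫ ((A ⊗ V) ◁ η) ≫ (α_ A V A).hom ≫ (A ◁ ψ) ≫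
    (α_ A A V).inv ≫ (μ ▷ V)

/-- The twisted condition
`(μ_A ⊗ V) ∘ (A ⊗ ψ) ∘ (σ ⊗ A) = (μ_A ⊗ V) ∘ (A ⊗ σ) ∘ (ψ ⊗ V) ∘ (V ⊗ ψ)`. -/
def Twisted {A V : C} (μ : A ⊗ A ⟶ A) (ψ : V ⊗ A ⟶ A ⊗ V)
    (σ : V ⊗ V ⟶ A ⊗ V) : Prop :=
  (σ ▷ A) ≫ (α_ A V A).hom ≫ (A ◁ ψ) ≫ (α_ A A V).inv ≫ (μ ▷ V)
    = (α_ V V A).hom ≫ (V ◁ ψ) ≫ (α_ V A V).inv ≫ (ψ ▷ V) ≫ (α_ A V V).hom ≫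
        (A ◁ σ) ≫ (α_ A A V).inv ≫ (μ ▷ V)

/-- The cocycle condition
`(μ_A ⊗ V) ∘ (A ⊗ σ) ∘ (σ ⊗ V) = (μ_A ⊗ V) ∘ (A ⊗ σ) ∘ (ψ ⊗ V) ∘ (V ⊗ σ)`. -/
def Cocycle {A V : C} (μ : A ⊗ A ⟶ A) (ψ : V ⊗ A ⟶ A ⊗ V)
    (σ : V ⊗ V ⟶ A ⊗ V) : Prop :=
  (σ ▷ V) ≫ (α_ A V V).hom ≫ (A ◁ σ) ≫ (α_ A A V).inv ≫ (μ ▷ V)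
    = (α_ V V V).hom ≫ (V ◁ σ) ≫ (α_ V A V).inv ≫ (ψ ▷ V) ≫ (α_ A V V).hom ≫
        (A ◁ σ) ≫ (α_ A A V).inv ≫ (μ ▷ V)

/-- Normalization : `∇_{A⊗V} ∘ σ = σ`. -/
def Normalized {A V : C} (η : 𝟙_ C ⟶ A) (μ : A ⊗ A ⟶ A) (ψ : V ⊗ A ⟶ A ⊗ V)
    (σ : V ⊗ V ⟶ A ⊗ V) : Prop :=
  σ ≫ nabla η μ ψ = σ

/-- `(ψ_V ⊗ W) ∘ (V ⊗ ψ_W) : (V ⊗ W) ⊗ A ⟶ A ⊗ (V ⊗ W)`. -/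
def psi2 {A V W : C} (ψV : V ⊗ A ⟶ A ⊗ V) (ψW : W ⊗ A ⟶ A ⊗ W) :
    (V ⊗ W) ⊗ A ⟶ A ⊗ (V ⊗ W) :=
  (α_ V W A).hom ≫ (V ◁ ψW) ≫ (α_ V A W).inv ≫ (ψV ▷ W) ≫ (α_ A V W).hom

/-- `ψ_{V⊗W} = (ψ_V ⊗ W) ∘ (V ⊗ ψ_W) ∘ (Δ ⊗ A)`. -/
def psiVW {A V W : C} (ψV : V ⊗ A ⟶ A ⊗ V) (ψW : W ⊗ A ⟶ A ⊗ W)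
    (Δ : V ⊗ W ⟶ V ⊗ W) : (V ⊗ W) ⊗ A ⟶ A ⊗ (V ⊗ W) :=
  (Δ ▷ A) ≫ psi2 ψV ψW

/-- `Δ` is a link morphism:
`ψ_{V⊗W} = (A ⊗ Δ) ∘ ψ_{V⊗W}` and `ψ_{V⊗W} = ∇_{A⊗V⊗W} ∘ (ψ_V ⊗ W) ∘ (V ⊗ ψ_W)`. -/
def IsLink {A V W : C} (η : 𝟙_ C ⟶ A) (μ : A ⊗ A ⟶ A)
    (ψV : V ⊗ A ⟶ A ⊗ V) (ψW : W ⊗ A ⟶ A ⊗ W) (Δ : V ⊗ W ⟶ V ⊗ W) : Prop :=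
  psiVW ψV ψW Δ = psiVW ψV ψW Δ ≫ (A ◁ Δ) ∧
  psiVW ψV ψW Δ = psi2 ψV ψW ≫ nabla η μ (psiVW ψV ψW Δ)

/-- The final multiplication step `(μ_A ⊗ V ⊗ W)` on `A ⊗ ((A ⊗ V) ⊗ W)`. -/
def muPart (V W : C) {A : C} (μ : A ⊗ A ⟶ A) :
    A ⊗ ((A ⊗ V) ⊗ W) ⟶ A ⊗ (V ⊗ W) :=
  (A ◁ (α_ A V W).hom) ≫ (α_ A A (V ⊗ W)).inv ≫ (μ ▷ (V ⊗ W))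

/-- Condition (i) of the definition of a twisting morphism:
`(ψ_V ⊗ W) ∘ (V ⊗ ψ_W) ∘ (τ ⊗ A) = (A ⊗ τ) ∘ (ψ_W ⊗ V) ∘ (W ⊗ ψ_V)`. -/
def TwistI {A V W : C} (ψV : V ⊗ A ⟶ A ⊗ V) (ψW : W ⊗ A ⟶ A ⊗ W)
    (τ : W ⊗ V ⟶ V ⊗ W) : Prop :=
  (τ ▷ A) ≫ psi2 ψV ψW
    = (α_ W V A).hom ≫ (W ◁ ψV) ≫ (α_ W A V).inv ≫ (ψW ▷ V) ≫
        (α_ A W V).hom ≫ (A ◁ τ)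

/-- Condition (ii) of the definition of a twisting morphism. -/
def TwistII {A V W : C} (μ : A ⊗ A ⟶ A) (ψV : V ⊗ A ⟶ A ⊗ V)
    (σV : V ⊗ V ⟶ A ⊗ V) (ψW : W ⊗ A ⟶ A ⊗ W) (σW : W ⊗ W ⟶ A ⊗ W)
    (τ : W ⊗ V ⟶ V ⊗ W) : Prop :=
  ((τ ▷ W) ▷ V) ≫ ((α_ V W W).hom ▷ V) ≫ ((V ◁ σW) ▷ V) ≫
      ((α_ V A W).inv ▷ V) ≫ (α_ (V ⊗ A) W V).hom ≫ (ψV ⊗ₘ τ) ≫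
      (α_ A V (V ⊗ W)).hom ≫ (A ◁ (α_ V V W).inv) ≫ (A ◁ (σV ▷ W)) ≫ muPart V W μ
    = (α_ (W ⊗ V) W V).hom ≫ ((W ⊗ V) ◁ τ) ≫ (α_ W V (V ⊗ W)).hom ≫
        (W ◁ (α_ V V W).inv) ≫ (W ◁ (σV ▷ W)) ≫ (W ◁ (α_ A V W).hom) ≫
        (α_ W A (V ⊗ W)).inv ≫ (ψW ▷ (V ⊗ W)) ≫ (α_ A W (V ⊗ W)).hom ≫
        (A ◁ (α_ W V W).inv) ≫ (A ◁ (τ ▷ W)) ≫ (A ◁ (α_ V W W).hom) ≫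
        (A ◁ (V ◁ σW)) ≫ (A ◁ (α_ V A W).inv) ≫ (A ◁ (ψV ▷ W)) ≫ muPart V W μ

/-- `σ_{V⊗W} = (μ_A ⊗ V ⊗ W) ∘ (A ⊗ ψ_V ⊗ W) ∘ (σ_V ⊗ σ_W) ∘ (V ⊗ τ ⊗ W)`. -/
def sigmaVW {A V W : C} (μ : A ⊗ A ⟶ A) (ψV : V ⊗ A ⟶ A ⊗ V)
    (σV : V ⊗ V ⟶ A ⊗ V) (σW : W ⊗ W ⟶ A ⊗ W) (τ : W ⊗ V ⟶ V ⊗ W) :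
    (V ⊗ W) ⊗ (V ⊗ W) ⟶ A ⊗ (V ⊗ W) :=
  (α_ V W (V ⊗ W)).hom ≫ (V ◁ (α_ W V W).inv) ≫ (V ◁ (τ ▷ W)) ≫
    (V ◁ (α_ V W W).hom) ≫ (α_ V V (W ⊗ W)).inv ≫ (σV ⊗ₘ σW) ≫
    (α_ A V (A ⊗ W)).hom ≫ (A ◁ (α_ V A W).inv) ≫ (A ◁ (ψV ▷ W)) ≫ muPart V W μ

/-- The three σ-compatibility conditions for `σ_{V⊗W}` and a link morphism `Δ`. -/
def SigmaCompat {A V W : C} (Δ : V ⊗ W ⟶ V ⊗ W)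
    (σ : (V ⊗ W) ⊗ (V ⊗ W) ⟶ A ⊗ (V ⊗ W)) : Prop :=
  σ = (Δ ▷ (V ⊗ W)) ≫ σ ∧ σ = ((V ⊗ W) ◁ Δ) ≫ σ ∧ σ = σ ≫ (A ◁ Δ)

/-- The weak crossed product multiplication
`μ_{A⊗V} = (μ_A ⊗ V) ∘ (μ_A ⊗ σ) ∘ (A ⊗ ψ ⊗ V)`. -/
def wmul {A V : C} (μ : A ⊗ A ⟶ A) (ψ : V ⊗ A ⟶ A ⊗ V) (σ : V ⊗ V ⟶ A ⊗ V) :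
    (A ⊗ V) ⊗ (A ⊗ V) ⟶ A ⊗ V :=
  (α_ A V (A ⊗ V)).hom ≫ (A ◁ (α_ V A V).inv) ≫ (A ◁ (ψ ▷ V)) ≫
    (A ◁ (α_ A V V).hom) ≫ (α_ A A (V ⊗ V)).inv ≫ (μ ⊗ₘ σ) ≫
    (α_ A A V).inv ≫ (μ ▷ V)

/-- `β_ν = (μ_A ⊗ V) ∘ (A ⊗ ν)`. -/
def beta {A V : C} (μ : A ⊗ A ⟶ A) (ν : 𝟙_ C ⟶ A ⊗ V) : A ⟶ A ⊗ V :=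
  (ρ_ A).inv ≫ (A ◁ ν) ≫ (α_ A A V).inv ≫ (μ ▷ V)

/-- Preunit equation (1):
`(μ_A ⊗ V) ∘ (A ⊗ σ) ∘ (ψ ⊗ V) ∘ (V ⊗ ν) = ∇_{A⊗V} ∘ (η_A ⊗ V)`. -/
def PreEq1 {A V : C} (η : 𝟙_ C ⟶ A) (μ : A ⊗ A ⟶ A) (ψ : V ⊗ A ⟶ A ⊗ V)
    (σ : V ⊗ V ⟶ A ⊗ V) (ν : 𝟙_ C ⟶ A ⊗ V) : Prop :=
  (ρ_ V).inv ≫ (V ◁ ν) ≫ (α_ V A V).inv ≫ (ψ ▷ V) ≫ (α_ A V V).hom ≫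
      (A ◁ σ) ≫ (α_ A A V).inv ≫ (μ ▷ V)
    = (λ_ V).inv ≫ (η ▷ V) ≫ nabla η μ ψ

/-- Preunit equation (2):
`(μ_A ⊗ V) ∘ (A ⊗ σ) ∘ (ν ⊗ V) = ∇_{A⊗V} ∘ (η_A ⊗ V)`. -/
def PreEq2 {A V : C} (η : 𝟙_ C ⟶ A) (μ : A ⊗ A ⟶ A) (ψ : V ⊗ A ⟶ A ⊗ V)
    (σ : V ⊗ V ⟶ A ⊗ V) (ν : 𝟙_ C ⟶ A ⊗ V) : Prop :=
  (λ_ V).inv ≫ (ν ▷ V) ≫ (α_ A V V).hom ≫ (A ◁ σ) ≫ (α_ A A V).inv ≫ (μ ▷ V)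
    = (λ_ V).inv ≫ (η ▷ V) ≫ nabla η μ ψ

/-- Preunit equation (3):
`(μ_A ⊗ V) ∘ (A ⊗ ψ) ∘ (ν ⊗ A) = β_ν`. -/
def PreEq3 {A V : C} (μ : A ⊗ A ⟶ A) (ψ : V ⊗ A ⟶ A ⊗ V)
    (ν : 𝟙_ C ⟶ A ⊗ V) : Prop :=
  (λ_ A).inv ≫ (ν ▷ A) ≫ (α_ A V A).hom ≫ (A ◁ ψ) ≫ (α_ A A V).inv ≫ (μ ▷ V)
    = beta μ ν

/-- `ν` is a preunit for the associative product `m` :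
`m ∘ (X ⊗ ν) = m ∘ (ν ⊗ X) = m ∘ (X ⊗ (m ∘ (ν ⊗ ν)))`. -/
def IsPreunit {X : C} (m : X ⊗ X ⟶ X) (ν : 𝟙_ C ⟶ X) : Prop :=
  (ρ_ X).inv ≫ (X ◁ ν) ≫ m = (λ_ X).inv ≫ (ν ▷ X) ≫ m ∧
  (λ_ X).inv ≫ (ν ▷ X) ≫ m
    = (ρ_ X).inv ≫ (X ◁ ((λ_ (𝟙_ C)).inv ≫ (ν ⊗ₘ ν) ≫ m)) ≫ m

/-- `ν_{V⊗W} = ∇_{A⊗V⊗W} ∘ (μ_A ⊗ V ⊗ W) ∘ (A ⊗ ψ_V ⊗ W) ∘ (ν_V ⊗ ν_W)`. -/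
def nuVW {A V W : C} (η : 𝟙_ C ⟶ A) (μ : A ⊗ A ⟶ A) (ψV : V ⊗ A ⟶ A ⊗ V)
    (ψW : W ⊗ A ⟶ A ⊗ W) (Δ : V ⊗ W ⟶ V ⊗ W)
    (νV : 𝟙_ C ⟶ A ⊗ V) (νW : 𝟙_ C ⟶ A ⊗ W) : 𝟙_ C ⟶ A ⊗ (V ⊗ W) :=
  (λ_ (𝟙_ C)).inv ≫ (νV ⊗ₘ νW) ≫ (α_ A V (A ⊗ W)).hom ≫ (A ◁ (α_ V A W).inv) ≫
    (A ◁ (ψV ▷ W)) ≫ muPart V W μ ≫ nabla η μ (psiVW ψV ψW Δ)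

/-- Iterated preunit condition (pre-1):
`(μ_A⊗V⊗W)∘(A⊗σ_V⊗W)∘(ψ_V⊗τ)∘(V⊗ψ_W⊗V)∘(Δ⊗ν_V) = ∇_{A⊗V⊗W}∘(η_A⊗V⊗W)`. -/
def IterPre1 {A V W : C} (η : 𝟙_ C ⟶ A) (μ : A ⊗ A ⟶ A)
    (ψV : V ⊗ A ⟶ A ⊗ V) (σV : V ⊗ V ⟶ A ⊗ V) (ψW : W ⊗ A ⟶ A ⊗ W)
    (τ : W ⊗ V ⟶ V ⊗ W) (Δ : V ⊗ W ⟶ V ⊗ W) (νV : 𝟙_ C ⟶ A ⊗ V) : Prop :=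
  (ρ_ (V ⊗ W)).inv ≫ (Δ ⊗ₘ νV) ≫ (α_ V W (A ⊗ V)).hom ≫ (V ◁ (α_ W A V).inv) ≫
      (V ◁ (ψW ▷ V)) ≫ (V ◁ (α_ A W V).hom) ≫ (α_ V A (W ⊗ V)).inv ≫ (ψV ⊗ₘ τ) ≫
      (α_ A V (V ⊗ W)).hom ≫ (A ◁ (α_ V V W).inv) ≫ (A ◁ (σV ▷ W)) ≫ muPart V W μ
    = (λ_ (V ⊗ W)).inv ≫ (η ▷ (V ⊗ W)) ≫ nabla η μ (psiVW ψV ψW Δ)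

/-- Iterated preunit condition (pre-2):
`(μ_A⊗V⊗W)∘(A⊗ψ_V⊗W)∘(A⊗V⊗σ_W)∘(A⊗τ⊗W)∘(ν_W⊗V⊗W) = ∇_{A⊗V⊗W}∘(η_A⊗V⊗W)`. -/
def IterPre2 {A V W : C} (η : 𝟙_ C ⟶ A) (μ : A ⊗ A ⟶ A)
    (ψV : V ⊗ A ⟶ A ⊗ V) (ψW : W ⊗ A ⟶ A ⊗ W) (σW : W ⊗ W ⟶ A ⊗ W)
    (τ : W ⊗ V ⟶ V ⊗ W) (Δ : V ⊗ W ⟶ V ⊗ W) (νW : 𝟙_ C ⟶ A ⊗ W) : Prop :=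
  (λ_ (V ⊗ W)).inv ≫ (νW ▷ (V ⊗ W)) ≫ (α_ A W (V ⊗ W)).hom ≫
      (A ◁ (α_ W V W).inv) ≫ (A ◁ (τ ▷ W)) ≫ (A ◁ (α_ V W W).hom) ≫
      (A ◁ (V ◁ σW)) ≫ (A ◁ (α_ V A W).inv) ≫ (A ◁ (ψV ▷ W)) ≫ muPart V W μ
    = (λ_ (V ⊗ W)).inv ≫ (η ▷ (V ⊗ W)) ≫ nabla η μ (psiVW ψV ψW Δ)

/-- `i_{A×V} = p_{A⊗V⊗W} ∘ (μ_A⊗V⊗W) ∘ (A⊗ψ_V⊗W) ∘ (i_{A⊗V} ⊗ ν_W)`. -/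
def iAV {A V W X Z : C} (μ : A ⊗ A ⟶ A) (ψV : V ⊗ A ⟶ A ⊗ V)
    (νW : 𝟙_ C ⟶ A ⊗ W) (iX : X ⟶ A ⊗ V) (p2 : A ⊗ (V ⊗ W) ⟶ Z) : X ⟶ Z :=
  (ρ_ X).inv ≫ (iX ⊗ₘ νW) ≫ (α_ A V (A ⊗ W)).hom ≫ (A ◁ (α_ V A W).inv) ≫
    (A ◁ (ψV ▷ W)) ≫ muPart V W μ ≫ p2

/-- `i_W = p_{A⊗V⊗W} ∘ (ν_V ⊗ W)`. -/
def iWmor {A V W Z : C} (νV : 𝟙_ C ⟶ A ⊗ V) (p2 : A ⊗ (V ⊗ W) ⟶ Z) : W ⟶ Z :=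
  (λ_ W).inv ≫ (νV ▷ W) ≫ (α_ A V W).hom ≫ p2

/-- `∇_{(A×V)⊗W} = (p_{A⊗V} ⊗ W) ∘ ∇_{A⊗V⊗W} ∘ (i_{A⊗V} ⊗ W)`. -/
def nabPrime {A V W X : C} (η : 𝟙_ C ⟶ A) (μ : A ⊗ A ⟶ A)
    (ψV : V ⊗ A ⟶ A ⊗ V) (ψW : W ⊗ A ⟶ A ⊗ W) (Δ : V ⊗ W ⟶ V ⊗ W)
    (iX : X ⟶ A ⊗ V) (pX : A ⊗ V ⟶ X) : X ⊗ W ⟶ X ⊗ W :=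
  (iX ▷ W) ≫ (α_ A V W).hom ≫ nabla η μ (psiVW ψV ψW Δ) ≫
    (α_ A V W).inv ≫ (pX ▷ W)

/-- Equality (new-it-1). -/
def NewIt1 {A V W : C} (η : 𝟙_ C ⟶ A) (μ : A ⊗ A ⟶ A)
    (ψV : V ⊗ A ⟶ A ⊗ V) (σV : V ⊗ V ⟶ A ⊗ V) (ψW : W ⊗ A ⟶ A ⊗ W)
    (τ : W ⊗ V ⟶ V ⊗ W) (Δ : V ⊗ W ⟶ V ⊗ W) (νW : 𝟙_ C ⟶ A ⊗ W) : Prop :=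
  (ρ_ (V ⊗ V)).inv ≫ ((V ⊗ V) ◁ νW) ≫ (α_ (V ⊗ V) A W).inv ≫
      (((σV ▷ A) ≫ (α_ A V A).hom ≫ (A ◁ ψV) ≫ (α_ A A V).inv ≫ (μ ▷ V)) ▷ W) ≫
      (α_ A V W).hom ≫ nabla η μ (psiVW ψV ψW Δ)
    = ((ρ_ V).inv ▷ V) ≫ ((V ◁ νW) ▷ V) ≫ ((α_ V A W).inv ▷ V) ≫
        (α_ (V ⊗ A) W V).hom ≫ (ψV ⊗ₘ τ) ≫ (α_ A V (V ⊗ W)).hom ≫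
        (A ◁ (α_ V V W).inv) ≫ (A ◁ (σV ▷ W)) ≫ muPart V W μ ≫
        nabla η μ (psiVW ψV ψW Δ)

/-- Equality (new-it-2). -/
def NewIt2 {A V W : C} (η : 𝟙_ C ⟶ A) (μ : A ⊗ A ⟶ A)
    (ψV : V ⊗ A ⟶ A ⊗ V) (σV : V ⊗ V ⟶ A ⊗ V) (ψW : W ⊗ A ⟶ A ⊗ W)
    (Δ : V ⊗ W ⟶ V ⊗ W) : Prop :=
  (σV ▷ W) ≫ (α_ A V W).hom ≫ nabla η μ (psiVW ψV ψW Δ)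
    = (α_ V V W).hom ≫ (V ◁ Δ) ≫ (ρ_ (V ⊗ (V ⊗ W))).inv ≫
        ((V ⊗ (V ⊗ W)) ◁ η) ≫ (α_ V (V ⊗ W) A).hom ≫ (V ◁ (α_ V W A).hom) ≫
        (α_ V V (W ⊗ A)).inv ≫ (σV ⊗ₘ ψW) ≫ (α_ A V (A ⊗ W)).hom ≫
        (A ◁ (α_ V A W).inv) ≫ (A ◁ (ψV ▷ W)) ≫ muPart V W μ

/-- Equality (new-it-3). -/
def NewIt3 {A V W : C} (η : 𝟙_ C ⟶ A) (μ : A ⊗ A ⟶ A)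
    (ψV : V ⊗ A ⟶ A ⊗ V) (ψW : W ⊗ A ⟶ A ⊗ W) (σW : W ⊗ W ⟶ A ⊗ W)
    (Δ : V ⊗ W ⟶ V ⊗ W) : Prop :=
  (V ◁ σW) ≫ (α_ V A W).inv ≫ (ψV ▷ W) ≫ (α_ A V W).hom ≫
      nabla η μ (psiVW ψV ψW Δ)
    = (α_ V W W).inv ≫ (Δ ▷ W) ≫ (α_ V W W).hom ≫ (V ◁ σW) ≫
        (α_ V A W).inv ≫ (ψV ▷ W) ≫ (α_ A V W).hom

/-- A weak distributive law of the monoid `S` over the monoid `T`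
(`lam : T ⊗ S ⟶ S ⊗ T`). -/
def WDL {T S : C} (ηT : 𝟙_ C ⟶ T) (μT : T ⊗ T ⟶ T) (ηS : 𝟙_ C ⟶ S)
    (μS : S ⊗ S ⟶ S) (lam : T ⊗ S ⟶ S ⊗ T) : Prop :=
  ((μT ▷ S) ≫ lam
      = (α_ T T S).hom ≫ (T ◁ lam) ≫ (α_ T S T).inv ≫ (lam ▷ T) ≫
          (α_ S T T).hom ≫ (S ◁ μT)) ∧
  ((T ◁ μS) ≫ lam
      = (α_ T S S).inv ≫ (lam ▷ S) ≫ (α_ S T S).hom ≫ (S ◁ lam) ≫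
          (α_ S S T).inv ≫ (μS ▷ T)) ∧
  ((((λ_ S).inv ≫ (ηT ▷ S) ≫ lam) ▷ T) ≫ (α_ S T T).hom ≫ (S ◁ μT)
      = (S ◁ ((ρ_ T).inv ≫ (T ◁ ηS) ≫ lam)) ≫ (α_ S S T).inv ≫ (μS ▷ T))

/-- The Yang–Baxter relation
`(S⊗λ2)∘(λ3⊗T)∘(D⊗λ1) = (λ1⊗D)∘(T⊗λ3)∘(λ2⊗S)`. -/
def YB {S T D : C} (l1 : T ⊗ S ⟶ S ⊗ T) (l2 : D ⊗ T ⟶ T ⊗ D)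
    (l3 : D ⊗ S ⟶ S ⊗ D) : Prop :=
  (α_ D T S).hom ≫ (D ◁ l1) ≫ (α_ D S T).inv ≫ (l3 ▷ T) ≫
      (α_ S D T).hom ≫ (S ◁ l2)
    = (l2 ▷ S) ≫ (α_ T D S).hom ≫ (T ◁ l3) ≫ (α_ T S D).inv ≫
        (l1 ▷ D) ≫ (α_ S T D).hom

/-- `σ_T = (S ⊗ μ_T) ∘ ((λ ∘ (T ⊗ η_S)) ⊗ T)`. -/
def sigWDL {S T : C} (ηS : 𝟙_ C ⟶ S) (μT : T ⊗ T ⟶ T)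
    (lam : T ⊗ S ⟶ S ⊗ T) : T ⊗ T ⟶ S ⊗ T :=
  (((ρ_ T).inv ≫ (T ◁ ηS) ≫ lam) ▷ T) ≫ (α_ S T T).hom ≫ (S ◁ μT)

/-- `∇_{S⊗T} = (μ_S ⊗ T) ∘ (S ⊗ (λ ∘ (T ⊗ η_S)))`. -/
def nabWDL {S T : C} (ηS : 𝟙_ C ⟶ S) (μS : S ⊗ S ⟶ S)
    (lam : T ⊗ S ⟶ S ⊗ T) : S ⊗ T ⟶ S ⊗ T :=
  (S ◁ ((ρ_ T).inv ≫ (T ◁ ηS) ≫ lam)) ≫ (α_ S S T).inv ≫ (μS ▷ T)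




set_option maxHeartbeats 2000000 in
private theorem nabla_absorb {A U : C} {η : 𝟙_ C ⟶ A} {μ : A ⊗ A ⟶ A}
    {ψ : U ⊗ A ⟶ A ⊗ U} (hu : (A ◁ η) ≫ μ = (ρ_ A).hom) (hψ : Compat μ ψ) :
    ψ ≫ nabla η μ ψ = ψ := by
  unfold nabla
  unfold Compat at hψ
  rw [rightUnitor_inv_naturality_assoc, ← whisker_exchange_assoc, hψ]
  have : (ρ_ (U ⊗ A)).inv ≫ ((U ⊗ A) ◁ η) ≫ (α_ U A A).hom ≫ (U ◁ μ)
      = U ◁ ((ρ_ A).inv ≫ (A ◁ η) ≫ μ) := by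
    simp only [MonoidalCategory.whiskerLeft_comp]; coherence
  rw [reassoc_of% this, hu]
  simp

set_option maxHeartbeats 2000000 in
private theorem nabla_idem' {A U : C} {η : 𝟙_ C ⟶ A} {μ : A ⊗ A ⟶ A}
    {ψ : U ⊗ A ⟶ A ⊗ U}
    (hassoc : (μ ▷ A) ≫ μ = (α_ A A A).hom ≫ (A ◁ μ) ≫ μ)
    (h : ψ ≫ nabla η μ ψ = ψ) :
    nabla η μ ψ ≫ nabla η μ ψ = nabla η μ ψ := by
  have key : nabla η μ ψ ≫ nabla η μ ψ
      = (ρ_ (A ⊗ U)).inv ≫ ((A ⊗ U) ◁ η) ≫ (α_ A U A).hom ≫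
          (A ◁ (ψ ≫ nabla η μ ψ)) ≫ (α_ A A U).inv ≫ (μ ▷ U) := by
    conv_lhs => unfold nabla
    simp only [Category.assoc]
    rw [rightUnitor_inv_naturality_assoc (μ ▷ U), ← whisker_exchange_assoc,
      associator_naturality_left_assoc, ← whisker_exchange_assoc,
      associator_inv_naturality_left_assoc, ← comp_whiskerRight, hassoc]
    conv_rhs => unfold nabla
    simp only [MonoidalCategory.whiskerLeft_comp, Category.assoc, comp_whiskerRight]
    coherence
  rw [key, h]; rfl

set_option maxHeartbeats 2000000 in
private theorem compat_psi2 {A V W : C} {μ : A ⊗ A ⟶ A}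
    {ψV : V ⊗ A ⟶ A ⊗ V} {ψW : W ⊗ A ⟶ A ⊗ W}
    (hψV : Compat μ ψV) (hψW : Compat μ ψW) :
    Compat μ (psi2 ψV ψW) := by
  unfold Compat at *
  unfold psi2
  calc
    _ = 𝟙 (((V ⊗ W) ⊗ A) ⊗ A) ⊗≫ (V ◁ (ψW ▷ A)) ⊗≫
          ((ψV ▷ (W ⊗ A)) ≫ ((A ⊗ V) ◁ ψW)) ⊗≫ (A ◁ (ψV ▷ W)) ⊗≫
          (μ ▷ (V ⊗ W)) := by coherence
    _ = 𝟙 (((V ⊗ W) ⊗ A) ⊗ A) ⊗≫ (V ◁ (ψW ▷ A)) ⊗≫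
          (((V ⊗ A) ◁ ψW) ≫ (ψV ▷ (A ⊗ W))) ⊗≫ (A ◁ (ψV ▷ W)) ⊗≫
          (μ ▷ (V ⊗ W)) := by rw [← whisker_exchange]
    _ = 𝟙 (((V ⊗ W) ⊗ A) ⊗ A) ⊗≫ (V ◁ (ψW ▷ A)) ⊗≫ ((V ⊗ A) ◁ ψW) ⊗≫
          (((ψV ▷ A) ≫ (α_ A V A).hom ≫ (A ◁ ψV) ≫ (α_ A A V).inv ≫ (μ ▷ V)) ▷ W) ⊗≫
          𝟙 (A ⊗ (V ⊗ W)) := by coherence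
    _ = 𝟙 (((V ⊗ W) ⊗ A) ⊗ A) ⊗≫ (V ◁ (ψW ▷ A)) ⊗≫ ((V ⊗ A) ◁ ψW) ⊗≫
          (((α_ V A A).hom ≫ (V ◁ μ) ≫ ψV) ▷ W) ⊗≫ 𝟙 (A ⊗ (V ⊗ W)) := by rw [hψV]
    _ = 𝟙 (((V ⊗ W) ⊗ A) ⊗ A) ⊗≫
          (V ◁ ((ψW ▷ A) ≫ (α_ A W A).hom ≫ (A ◁ ψW) ≫ (α_ A A W).inv ≫ (μ ▷ W))) ⊗≫
          (ψV ▷ W) ⊗≫ 𝟙 (A ⊗ (V ⊗ W)) := by coherence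
    _ = 𝟙 (((V ⊗ W) ⊗ A) ⊗ A) ⊗≫
          (V ◁ ((α_ W A A).hom ≫ (W ◁ μ) ≫ ψW)) ⊗≫
          (ψV ▷ W) ⊗≫ 𝟙 (A ⊗ (V ⊗ W)) := by rw [hψW]
    _ = _ := by coherence

set_option maxHeartbeats 2000000 in
private theorem nabla_factor {A V W : C} {η : 𝟙_ C ⟶ A} {μ : A ⊗ A ⟶ A}
    {ψV : V ⊗ A ⟶ A ⊗ V} {ψW : W ⊗ A ⟶ A ⊗ W} {Δ : V ⊗ W ⟶ V ⊗ W} :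
    nabla η μ (psiVW ψV ψW Δ) = (A ◁ Δ) ≫ nabla η μ (psi2 ψV ψW) := by
  unfold nabla psiVW
  simp only [MonoidalCategory.whiskerLeft_comp, Category.assoc]
  rw [← associator_naturality_middle_assoc, whisker_exchange_assoc,
    rightUnitor_inv_naturality_assoc]

theorem statement1 {A V W : C} (η : 𝟙_ C ⟶ A) (μ : A ⊗ A ⟶ A)
    (ψV : V ⊗ A ⟶ A ⊗ V) (σV : V ⊗ V ⟶ A ⊗ V)
    (ψW : W ⊗ A ⟶ A ⊗ W) (σW : W ⊗ W ⟶ A ⊗ W)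
    (Δ : V ⊗ W ⟶ V ⊗ W)
    (hA : IsMonoid η μ) (hψV : Compat μ ψV) (hψW : Compat μ ψW)
    (hΔ : IsLink η μ ψV ψW Δ) :
    nabla η μ (psiVW ψV ψW Δ) ≫ nabla η μ (psiVW ψV ψW Δ)
        = nabla η μ (psiVW ψV ψW Δ) ∧
      psiVW ψV ψW Δ ≫ nabla η μ (psiVW ψV ψW Δ) = psiVW ψV ψW Δ := by
  obtain ⟨hul, hur, hassoc⟩ := hA
  obtain ⟨h1, h2⟩ := hΔ
  have c2 : Compat μ (psi2 ψV ψW) := compat_psi2 hψV hψW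
  have n2abs : psi2 ψV ψW ≫ nabla η μ (psi2 ψV ψW) = psi2 ψV ψW :=
    nabla_absorb hur c2
  have n2idem : nabla η μ (psi2 ψV ψW) ≫ nabla η μ (psi2 ψV ψW)
      = nabla η μ (psi2 ψV ψW) := nabla_idem' hassoc n2abs
  have e1 : psiVW ψV ψW Δ ≫ nabla η μ (psi2 ψV ψW) = psiVW ψV ψW Δ := by
    conv_lhs => rw [h2]
    conv_rhs => rw [h2]
    rw [nabla_factor]
    simp only [Category.assoc]
    rw [n2idem]
  have habs : psiVW ψV ψW Δ ≫ nabla η μ (psiVW ψV ψW Δ) = psiVW ψV ψW Δ := by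
    rw [nabla_factor, ← Category.assoc, ← h1]
    exact e1
  exact ⟨nabla_idem' hassoc habs, habs⟩


end IteratedWCP
end

section
/- Under the standing iterated-preunit hypotheses, the morphism ν_{V⊗W} = ∇_{A⊗V⊗W}∘(μ_A⊗V⊗W)∘(A⊗ψ_V⊗W)∘(ν_V⊗ν_W) : K → A⊗V⊗W satisfies (μ_A⊗(V⊗W))∘(A⊗ψ_{V⊗W})∘(ν_{V⊗W}⊗A) = β_{ν_{V⊗W}}, where β_{ν_{V⊗W}} = (μ_A⊗(V⊗W))∘(A⊗ν_{V⊗W}). -/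
open CategoryTheory MonoidalCategory

namespace IteratedWCP

universe v u

variable {C : Type u} [Category.{v} C] [MonoidalCategory C]

section Generic
variable {A X : C} (η : 𝟙_ C ⟶ A) (μ : A ⊗ A ⟶ A) (ψ : X ⊗ A ⟶ A ⊗ X)

lemma helper1 {P Q B : C} (f : P ⟶ Q) (h : 𝟙_ C ⟶ B) :
    f ≫ (ρ_ Q).inv ≫ (Q ◁ h) = (ρ_ P).inv ≫ (P ◁ h) ≫ (f ▷ B) := by
  simp [whisker_exchange]

/-- `∇` commutes with left multiplication. -/
lemma nabla_mul (hA : IsMonoid η μ) :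
    (μ ▷ X) ≫ nabla η μ ψ
      = (α_ A A X).hom ≫ (A ◁ nabla η μ ψ) ≫ (α_ A A X).inv ≫ (μ ▷ X) := by
  simp only [nabla, Category.assoc, MonoidalCategory.whiskerLeft_comp]
  slice_lhs 1 3 => rw [helper1]
  slice_lhs 3 4 => rw [associator_naturality_left]
  slice_lhs 4 5 => rw [← whisker_exchange]
  slice_lhs 5 6 => rw [associator_inv_naturality_left]
  slice_lhs 6 7 => rw [← comp_whiskerRight, hA.2.2]
  monoidal

lemma nabla_mul' (hA : IsMonoid η μ) :
    (A ◁ nabla η μ ψ) ≫ (α_ A A X).inv ≫ (μ ▷ X)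
      = (α_ A A X).inv ≫ (μ ▷ X) ≫ nabla η μ ψ := by
  calc (A ◁ nabla η μ ψ) ≫ (α_ A A X).inv ≫ (μ ▷ X)
      = (α_ A A X).inv ≫ ((α_ A A X).hom ≫ (A ◁ nabla η μ ψ) ≫
          (α_ A A X).inv ≫ (μ ▷ X)) := by simp
    _ = (α_ A A X).inv ≫ (μ ▷ X) ≫ nabla η μ ψ := by
        rw [← nabla_mul η μ ψ hA]

/-- `∇ ⊗ A` is absorbed by the product. -/
lemma nabla_absorb_s6 (hA : IsMonoid η μ) (hψ : Compat μ ψ) :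
    (nabla η μ ψ ▷ A) ≫ (α_ A X A).hom ≫ (A ◁ ψ) ≫ (α_ A A X).inv ≫ (μ ▷ X)
      = (α_ A X A).hom ≫ (A ◁ ψ) ≫ (α_ A A X).inv ≫ (μ ▷ X) := by
  have hψ' : (ψ ▷ A) ≫ (α_ A X A).hom ≫ (A ◁ ψ) ≫ (α_ A A X).inv ≫ (μ ▷ X)
      = (α_ X A A).hom ≫ (X ◁ μ) ≫ ψ := hψ
  calc (nabla η μ ψ ▷ A) ≫ (α_ A X A).hom ≫ (A ◁ ψ) ≫ (α_ A A X).inv ≫ (μ ▷ X)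
      = 𝟙 _ ⊗≫ (A ◁ (((ρ_ X).inv ≫ (X ◁ η) ≫ ψ) ▷ A)) ⊗≫
          ((μ ▷ (X ⊗ A)) ≫ (A ◁ ψ)) ⊗≫ (μ ▷ X) ⊗≫ 𝟙 _ := by
        simp only [nabla, Category.assoc, comp_whiskerRight,
          MonoidalCategory.whiskerLeft_comp]
        monoidal
    _ = 𝟙 _ ⊗≫ (A ◁ (((ρ_ X).inv ≫ (X ◁ η) ≫ ψ) ▷ A)) ⊗≫
          (((A ⊗ A) ◁ ψ) ≫ (μ ▷ (A ⊗ X))) ⊗≫ (μ ▷ X) ⊗≫ 𝟙 _ := by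
        rw [← whisker_exchange]
    _ = 𝟙 _ ⊗≫ (A ◁ (((ρ_ X).inv ≫ (X ◁ η)) ▷ A)) ⊗≫
          (A ◁ ((ψ ▷ A) ≫ (α_ A X A).hom ≫ (A ◁ ψ))) ⊗≫
          (((μ ▷ A) ≫ μ) ▷ X) ⊗≫ 𝟙 _ := by monoidal
    _ = 𝟙 _ ⊗≫ (A ◁ (((ρ_ X).inv ≫ (X ◁ η)) ▷ A)) ⊗≫
          (A ◁ ((ψ ▷ A) ≫ (α_ A X A).hom ≫ (A ◁ ψ))) ⊗≫
          (((α_ A A A).hom ≫ (A ◁ μ) ≫ μ) ▷ X) ⊗≫ 𝟙 _ := by rw [hA.2.2]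
    _ = 𝟙 _ ⊗≫ (A ◁ (((ρ_ X).inv ≫ (X ◁ η)) ▷ A)) ⊗≫
          (A ◁ ((ψ ▷ A) ≫ (α_ A X A).hom ≫ (A ◁ ψ) ≫ (α_ A A X).inv ≫ (μ ▷ X)))
          ⊗≫ (μ ▷ X) ⊗≫ 𝟙 _ := by monoidal
    _ = 𝟙 _ ⊗≫ (A ◁ (((ρ_ X).inv ≫ (X ◁ η)) ▷ A)) ⊗≫
          (A ◁ ((α_ X A A).hom ≫ (X ◁ μ) ≫ ψ)) ⊗≫ (μ ▷ X) ⊗≫ 𝟙 _ := by rw [hψ']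
    _ = 𝟙 _ ⊗≫ (A ◁ ((X ◁ ((λ_ A).inv ≫ (η ▷ A) ≫ μ)) ≫ ψ)) ⊗≫
          (μ ▷ X) ⊗≫ 𝟙 _ := by monoidal
    _ = 𝟙 _ ⊗≫ (A ◁ ((X ◁ (λ_ A).inv ≫ X ◁ (λ_ A).hom) ≫ ψ)) ⊗≫
          (μ ▷ X) ⊗≫ 𝟙 _ := by rw [hA.1]; simp
    _ = (α_ A X A).hom ≫ (A ◁ ψ) ≫ (α_ A A X).inv ≫ (μ ▷ X) := by monoidal

end Generic

section CompatPsi2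
variable {A V W : C} (μ : A ⊗ A ⟶ A) (ψV : V ⊗ A ⟶ A ⊗ V) (ψW : W ⊗ A ⟶ A ⊗ W)

lemma compat_psi2_s6 (hV : Compat μ ψV) (hW : Compat μ ψW) :
    Compat μ (psi2 ψV ψW) := by
  have hV' : (ψV ▷ A) ≫ (α_ A V A).hom ≫ (A ◁ ψV) ≫ (α_ A A V).inv ≫ (μ ▷ V)
      = (α_ V A A).hom ≫ (V ◁ μ) ≫ ψV := hV
  have hW' : (ψW ▷ A) ≫ (α_ A W A).hom ≫ (A ◁ ψW) ≫ (α_ A A W).inv ≫ (μ ▷ W)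
      = (α_ W A A).hom ≫ (W ◁ μ) ≫ ψW := hW
  show (psi2 ψV ψW ▷ A) ≫ (α_ A (V ⊗ W) A).hom ≫ (A ◁ psi2 ψV ψW) ≫
      (α_ A A (V ⊗ W)).inv ≫ (μ ▷ (V ⊗ W))
    = (α_ (V ⊗ W) A A).hom ≫ ((V ⊗ W) ◁ μ) ≫ psi2 ψV ψW
  calc (psi2 ψV ψW ▷ A) ≫ (α_ A (V ⊗ W) A).hom ≫ (A ◁ psi2 ψV ψW) ≫
      (α_ A A (V ⊗ W)).inv ≫ (μ ▷ (V ⊗ W))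
      = 𝟙 _ ⊗≫ (V ◁ (ψW ▷ A)) ⊗≫
          ((ψV ▷ (W ⊗ A)) ≫ ((A ⊗ V) ◁ ψW)) ⊗≫
          (A ◁ (ψV ▷ W)) ⊗≫ (μ ▷ (V ⊗ W)) ⊗≫ 𝟙 _ := by
        simp only [psi2]; monoidal
    _ = 𝟙 _ ⊗≫ (V ◁ (ψW ▷ A)) ⊗≫
          (((V ⊗ A) ◁ ψW) ≫ (ψV ▷ (A ⊗ W))) ⊗≫
          (A ◁ (ψV ▷ W)) ⊗≫ (μ ▷ (V ⊗ W)) ⊗≫ 𝟙 _ := by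
        rw [← whisker_exchange]
    _ = 𝟙 _ ⊗≫ (V ◁ (ψW ▷ A)) ⊗≫ ((V ⊗ A) ◁ ψW) ⊗≫
          (((ψV ▷ A) ≫ (α_ A V A).hom ≫ (A ◁ ψV) ≫ (α_ A A V).inv ≫ (μ ▷ V)) ▷ W)
          ⊗≫ 𝟙 _ := by
        monoidal
    _ = 𝟙 _ ⊗≫ (V ◁ (ψW ▷ A)) ⊗≫ ((V ⊗ A) ◁ ψW) ⊗≫
          (((α_ V A A).hom ≫ (V ◁ μ) ≫ ψV) ▷ W) ⊗≫ 𝟙 _ := by rw [hV']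
    _ = 𝟙 _ ⊗≫ (V ◁ ((ψW ▷ A) ≫ (α_ A W A).hom ≫ (A ◁ ψW) ≫ (α_ A A W).inv ≫
          (μ ▷ W))) ⊗≫ (ψV ▷ W) ⊗≫ 𝟙 _ := by monoidal
    _ = 𝟙 _ ⊗≫ (V ◁ ((α_ W A A).hom ≫ (W ◁ μ) ≫ ψW)) ⊗≫ (ψV ▷ W) ⊗≫ 𝟙 _ := by
        rw [hW']
    _ = (α_ (V ⊗ W) A A).hom ≫ ((V ⊗ W) ◁ μ) ≫ psi2 ψV ψW := by
        simp only [psi2]; monoidal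

end CompatPsi2

section CompatPsiVW
variable {A V W : C} (η : 𝟙_ C ⟶ A) (μ : A ⊗ A ⟶ A)
  (ψV : V ⊗ A ⟶ A ⊗ V) (ψW : W ⊗ A ⟶ A ⊗ W) (Δ : V ⊗ W ⟶ V ⊗ W)

lemma compat_psiVW (hq : Compat μ (psi2 ψV ψW))
    (hΔ1 : psiVW ψV ψW Δ = psiVW ψV ψW Δ ≫ (A ◁ Δ)) :
    Compat μ (psiVW ψV ψW Δ) := by
  have hq' : (psi2 ψV ψW ▷ A) ≫ (α_ A (V ⊗ W) A).hom ≫ (A ◁ psi2 ψV ψW) ≫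
      (α_ A A (V ⊗ W)).inv ≫ (μ ▷ (V ⊗ W))
      = (α_ (V ⊗ W) A A).hom ≫ ((V ⊗ W) ◁ μ) ≫ psi2 ψV ψW := hq
  have hΔ1' : (Δ ▷ A) ≫ psi2 ψV ψW ≫ (A ◁ Δ) = (Δ ▷ A) ≫ psi2 ψV ψW := by
    have h := hΔ1
    simp only [psiVW, Category.assoc] at h
    exact h.symm
  show (psiVW ψV ψW Δ ▷ A) ≫ (α_ A (V ⊗ W) A).hom ≫ (A ◁ psiVW ψV ψW Δ) ≫
      (α_ A A (V ⊗ W)).inv ≫ (μ ▷ (V ⊗ W))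
    = (α_ (V ⊗ W) A A).hom ≫ ((V ⊗ W) ◁ μ) ≫ psiVW ψV ψW Δ
  calc (psiVW ψV ψW Δ ▷ A) ≫ (α_ A (V ⊗ W) A).hom ≫ (A ◁ psiVW ψV ψW Δ) ≫
      (α_ A A (V ⊗ W)).inv ≫ (μ ▷ (V ⊗ W))
      = (((Δ ▷ A) ≫ psi2 ψV ψW ≫ (A ◁ Δ)) ▷ A) ≫ (α_ A (V ⊗ W) A).hom ≫
          (A ◁ psi2 ψV ψW) ≫ (α_ A A (V ⊗ W)).inv ≫ (μ ▷ (V ⊗ W)) := by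
        simp only [psiVW, Category.assoc, comp_whiskerRight,
          MonoidalCategory.whiskerLeft_comp]
        monoidal
    _ = (((Δ ▷ A) ≫ psi2 ψV ψW) ▷ A) ≫ (α_ A (V ⊗ W) A).hom ≫
          (A ◁ psi2 ψV ψW) ≫ (α_ A A (V ⊗ W)).inv ≫ (μ ▷ (V ⊗ W)) := by
        rw [hΔ1']
    _ = ((Δ ▷ A) ▷ A) ≫ ((psi2 ψV ψW ▷ A) ≫ (α_ A (V ⊗ W) A).hom ≫
          (A ◁ psi2 ψV ψW) ≫ (α_ A A (V ⊗ W)).inv ≫ (μ ▷ (V ⊗ W))) := by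
        simp only [comp_whiskerRight, Category.assoc]
    _ = ((Δ ▷ A) ▷ A) ≫ (α_ (V ⊗ W) A A).hom ≫ ((V ⊗ W) ◁ μ) ≫ psi2 ψV ψW := by
        rw [hq']
    _ = 𝟙 _ ⊗≫ ((Δ ▷ (A ⊗ A)) ≫ ((V ⊗ W) ◁ μ)) ⊗≫ psi2 ψV ψW ⊗≫ 𝟙 _ := by
        monoidal
    _ = 𝟙 _ ⊗≫ (((V ⊗ W : C) ◁ μ) ≫ (Δ ▷ A)) ⊗≫ psi2 ψV ψW ⊗≫ 𝟙 _ := by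
        rw [← whisker_exchange]
    _ = (α_ (V ⊗ W) A A).hom ≫ ((V ⊗ W) ◁ μ) ≫ psiVW ψV ψW Δ := by
        simp only [psiVW]; monoidal

end CompatPsiVW

section Core
variable {A V W : C} (η : 𝟙_ C ⟶ A) (μ : A ⊗ A ⟶ A)
  (ψV : V ⊗ A ⟶ A ⊗ V) (ψW : W ⊗ A ⟶ A ⊗ W)
  (νV : 𝟙_ C ⟶ A ⊗ V) (νW : 𝟙_ C ⟶ A ⊗ W)

set_option maxHeartbeats 2000000 in
lemma core (hA : IsMonoid η μ) (hψV : Compat μ ψV)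
    (hp3V : PreEq3 μ ψV νV) (hp3W : PreEq3 μ ψW νW) :
    (λ_ A).inv ≫
      (((λ_ (𝟙_ C)).inv ≫ (νV ⊗ₘ νW) ≫ (α_ A V (A ⊗ W)).hom ≫
        (A ◁ (α_ V A W).inv) ≫ (A ◁ (ψV ▷ W)) ≫ muPart V W μ) ▷ A) ≫
      (α_ A (V ⊗ W) A).hom ≫ (A ◁ psi2 ψV ψW) ≫ (α_ A A (V ⊗ W)).inv ≫
      (μ ▷ (V ⊗ W))
    = (ρ_ A).inv ≫
      (A ◁ ((λ_ (𝟙_ C)).inv ≫ (νV ⊗ₘ νW) ≫ (α_ A V (A ⊗ W)).hom ≫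
        (A ◁ (α_ V A W).inv) ≫ (A ◁ (ψV ▷ W)) ≫ muPart V W μ)) ≫
      (α_ A A (V ⊗ W)).inv ≫ (μ ▷ (V ⊗ W)) := by
  have hA22 : (μ ▷ A) ≫ μ = (α_ A A A).hom ≫ (A ◁ μ) ≫ μ := hA.2.2
  have hψV' : (ψV ▷ A) ≫ (α_ A V A).hom ≫ (A ◁ ψV) ≫ (α_ A A V).inv ≫ (μ ▷ V)
      = (α_ V A A).hom ≫ (V ◁ μ) ≫ ψV := hψV
  have hp3V' : (λ_ A).inv ≫ (νV ▷ A) ≫ (α_ A V A).hom ≫ (A ◁ ψV) ≫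
      (α_ A A V).inv ≫ (μ ▷ V)
      = (ρ_ A).inv ≫ (A ◁ νV) ≫ (α_ A A V).inv ≫ (μ ▷ V) := hp3V
  have hp3W' : (λ_ A).inv ≫ (νW ▷ A) ≫ (α_ A W A).hom ≫ (A ◁ ψW) ≫
      (α_ A A W).inv ≫ (μ ▷ W)
      = (ρ_ A).inv ≫ (A ◁ νW) ≫ (α_ A A W).inv ≫ (μ ▷ W) := hp3W
  calc (λ_ A).inv ≫
      (((λ_ (𝟙_ C)).inv ≫ (νV ⊗ₘ νW) ≫ (α_ A V (A ⊗ W)).hom ≫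
        (A ◁ (α_ V A W).inv) ≫ (A ◁ (ψV ▷ W)) ≫ muPart V W μ) ▷ A) ≫
      (α_ A (V ⊗ W) A).hom ≫ (A ◁ psi2 ψV ψW) ≫ (α_ A A (V ⊗ W)).inv ≫
      (μ ▷ (V ⊗ W))
      -- T1' : μ₁ adjacent to the (ψW₂, ψV₂)-chunk, ready for exchange
      = 𝟙 A ⊗≫ (νV ▷ A) ⊗≫ ((A ⊗ V) ◁ (νW ▷ A)) ⊗≫ (A ◁ (ψV ▷ (W ⊗ A))) ⊗≫
          ((μ ▷ (V ⊗ (W ⊗ A))) ≫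
            (A ◁ ((V ◁ ψW) ≫ (α_ V A W).inv ≫ (ψV ▷ W)))) ⊗≫
          (μ ▷ (V ⊗ W)) ⊗≫ 𝟙 _ := by
        simp only [psi2, muPart, MonoidalCategory.tensorHom_def, Category.assoc,
          comp_whiskerRight, MonoidalCategory.whiskerLeft_comp]
        monoidal
    _ = 𝟙 A ⊗≫ (νV ▷ A) ⊗≫ ((A ⊗ V) ◁ (νW ▷ A)) ⊗≫ (A ◁ (ψV ▷ (W ⊗ A))) ⊗≫
          (((A ⊗ A) ◁ ((V ◁ ψW) ≫ (α_ V A W).inv ≫ (ψV ▷ W))) ≫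
            (μ ▷ ((A ⊗ V) ⊗ W))) ⊗≫
          (μ ▷ (V ⊗ W)) ⊗≫ 𝟙 _ := by rw [← whisker_exchange]
      -- T3 : group the two μ's
    _ = 𝟙 A ⊗≫ (νV ▷ A) ⊗≫ ((A ⊗ V) ◁ (νW ▷ A)) ⊗≫
          (A ◁ ((ψV ▷ (W ⊗ A)) ≫ ((A ⊗ V) ◁ ψW) ≫ (α_ A V (A ⊗ W)).hom ≫
            (A ◁ (α_ V A W).inv) ≫ (A ◁ (ψV ▷ W)))) ⊗≫
          (((μ ▷ A) ≫ μ) ▷ (V ⊗ W)) ⊗≫ 𝟙 _ := by monoidal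
    _ = 𝟙 A ⊗≫ (νV ▷ A) ⊗≫ ((A ⊗ V) ◁ (νW ▷ A)) ⊗≫
          (A ◁ ((ψV ▷ (W ⊗ A)) ≫ ((A ⊗ V) ◁ ψW) ≫ (α_ A V (A ⊗ W)).hom ≫
            (A ◁ (α_ V A W).inv) ≫ (A ◁ (ψV ▷ W)))) ⊗≫
          (((α_ A A A).hom ≫ (A ◁ μ) ≫ μ) ▷ (V ⊗ W)) ⊗≫ 𝟙 _ := by rw [hA22]
      -- exchange ψV₁ with ψW₂
    _ = 𝟙 A ⊗≫ (νV ▷ A) ⊗≫ ((A ⊗ V) ◁ (νW ▷ A)) ⊗≫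
          (A ◁ ((ψV ▷ (W ⊗ A)) ≫ ((A ⊗ V) ◁ ψW))) ⊗≫
          (A ◁ ((A ◁ (ψV ▷ W)) ≫ (α_ A (A ⊗ V) W).inv ≫ ((α_ A A V).inv ▷ W) ≫
            ((μ ▷ V) ▷ W))) ⊗≫
          (μ ▷ (V ⊗ W)) ⊗≫ 𝟙 _ := by monoidal
    _ = 𝟙 A ⊗≫ (νV ▷ A) ⊗≫ ((A ⊗ V) ◁ (νW ▷ A)) ⊗≫
          (A ◁ (((V ⊗ A) ◁ ψW) ≫ (ψV ▷ (A ⊗ W)))) ⊗≫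
          (A ◁ ((A ◁ (ψV ▷ W)) ≫ (α_ A (A ⊗ V) W).inv ≫ ((α_ A A V).inv ▷ W) ≫
            ((μ ▷ V) ▷ W))) ⊗≫
          (μ ▷ (V ⊗ W)) ⊗≫ 𝟙 _ := by rw [← whisker_exchange]
      -- T5 : group the Compat-pattern for ψV
    _ = 𝟙 A ⊗≫ (νV ▷ A) ⊗≫ ((A ⊗ V) ◁ (νW ▷ A)) ⊗≫ ((A ⊗ (V ⊗ A)) ◁ ψW) ⊗≫
          (A ◁ (((ψV ▷ A) ≫ (α_ A V A).hom ≫ (A ◁ ψV) ≫ (α_ A A V).inv ≫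
            (μ ▷ V)) ▷ W)) ⊗≫ (μ ▷ (V ⊗ W)) ⊗≫ 𝟙 _ := by monoidal
    _ = 𝟙 A ⊗≫ (νV ▷ A) ⊗≫ ((A ⊗ V) ◁ (νW ▷ A)) ⊗≫ ((A ⊗ (V ⊗ A)) ◁ ψW) ⊗≫
          (A ◁ (((α_ V A A).hom ≫ (V ◁ μ) ≫ ψV) ▷ W)) ⊗≫
          (μ ▷ (V ⊗ W)) ⊗≫ 𝟙 _ := by rw [hψV']
      -- T6 : group the PreEq3-pattern for ψW
    _ = 𝟙 A ⊗≫ (νV ▷ A) ⊗≫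
          ((A ⊗ V) ◁ ((λ_ A).inv ≫ (νW ▷ A) ≫ (α_ A W A).hom ≫ (A ◁ ψW) ≫
            (α_ A A W).inv ≫ (μ ▷ W))) ⊗≫
          (A ◁ (ψV ▷ W)) ⊗≫ (μ ▷ (V ⊗ W)) ⊗≫ 𝟙 _ := by monoidal
    _ = 𝟙 A ⊗≫ (νV ▷ A) ⊗≫
          ((A ⊗ V) ◁ ((ρ_ A).inv ≫ (A ◁ νW) ≫ (α_ A A W).inv ≫ (μ ▷ W))) ⊗≫
          (A ◁ (ψV ▷ W)) ⊗≫ (μ ▷ (V ⊗ W)) ⊗≫ 𝟙 _ := by rw [hp3W']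
      -- T7 : group the reversed Compat-pattern for ψV
    _ = 𝟙 A ⊗≫ (νV ▷ A) ⊗≫ ((A ⊗ (V ⊗ A)) ◁ νW) ⊗≫
          (A ◁ (((α_ V A A).hom ≫ (V ◁ μ) ≫ ψV) ▷ W)) ⊗≫
          (μ ▷ (V ⊗ W)) ⊗≫ 𝟙 _ := by monoidal
    _ = 𝟙 A ⊗≫ (νV ▷ A) ⊗≫ ((A ⊗ (V ⊗ A)) ◁ νW) ⊗≫
          (A ◁ (((ψV ▷ A) ≫ (α_ A V A).hom ≫ (A ◁ ψV) ≫ (α_ A A V).inv ≫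
            (μ ▷ V)) ▷ W)) ⊗≫ (μ ▷ (V ⊗ W)) ⊗≫ 𝟙 _ := by rw [hψV']
      -- T8 : regroup the μ's
    _ = 𝟙 A ⊗≫ (νV ▷ A) ⊗≫ ((A ⊗ (V ⊗ A)) ◁ νW) ⊗≫
          (A ◁ (((ψV ▷ A) ≫ (α_ A V A).hom ≫ (A ◁ ψV)) ▷ W)) ⊗≫
          (((α_ A A A).hom ≫ (A ◁ μ) ≫ μ) ▷ (V ⊗ W)) ⊗≫ 𝟙 _ := by monoidal
    _ = 𝟙 A ⊗≫ (νV ▷ A) ⊗≫ ((A ⊗ (V ⊗ A)) ◁ νW) ⊗≫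
          (A ◁ (((ψV ▷ A) ≫ (α_ A V A).hom ≫ (A ◁ ψV)) ▷ W)) ⊗≫
          (((μ ▷ A) ≫ μ) ▷ (V ⊗ W)) ⊗≫ 𝟙 _ := by rw [hA22]
      -- T9a : exchange ψV_b with μ₁
    _ = 𝟙 A ⊗≫ (νV ▷ A) ⊗≫ ((A ⊗ (V ⊗ A)) ◁ νW) ⊗≫ (A ◁ (ψV ▷ (A ⊗ W))) ⊗≫
          (((A ⊗ A) ◁ (ψV ▷ W)) ≫ (μ ▷ ((A ⊗ V) ⊗ W))) ⊗≫
          (μ ▷ (V ⊗ W)) ⊗≫ 𝟙 _ := by monoidal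
    _ = 𝟙 A ⊗≫ (νV ▷ A) ⊗≫ ((A ⊗ (V ⊗ A)) ◁ νW) ⊗≫ (A ◁ (ψV ▷ (A ⊗ W))) ⊗≫
          ((μ ▷ ((V ⊗ A) ⊗ W)) ≫ (A ◁ (ψV ▷ W))) ⊗≫
          (μ ▷ (V ⊗ W)) ⊗≫ 𝟙 _ := by rw [whisker_exchange]
      -- T9b : exchange νW with the (ψV_a, μ₁)-chunk
    _ = 𝟙 A ⊗≫ (νV ▷ A) ⊗≫
          (((A ⊗ (V ⊗ A)) ◁ νW) ≫
            (((A ◁ ψV) ≫ (α_ A A V).inv ≫ (μ ▷ V)) ▷ (A ⊗ W))) ⊗≫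
          (A ◁ (ψV ▷ W)) ⊗≫ (μ ▷ (V ⊗ W)) ⊗≫ 𝟙 _ := by monoidal
    _ = 𝟙 A ⊗≫ (νV ▷ A) ⊗≫
          ((((A ◁ ψV) ≫ (α_ A A V).inv ≫ (μ ▷ V)) ▷ 𝟙_ C) ≫
            ((A ⊗ V) ◁ νW)) ⊗≫
          (A ◁ (ψV ▷ W)) ⊗≫ (μ ▷ (V ⊗ W)) ⊗≫ 𝟙 _ := by rw [whisker_exchange]
      -- T10 : group the PreEq3-pattern for ψV
    _ = ((λ_ A).inv ≫ (νV ▷ A) ≫ (α_ A V A).hom ≫ (A ◁ ψV) ≫ (α_ A A V).inv ≫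
          (μ ▷ V)) ⊗≫ ((A ⊗ V) ◁ νW) ⊗≫ (A ◁ (ψV ▷ W)) ⊗≫
          (μ ▷ (V ⊗ W)) ⊗≫ 𝟙 _ := by monoidal
    _ = ((ρ_ A).inv ≫ (A ◁ νV) ≫ (α_ A A V).inv ≫ (μ ▷ V)) ⊗≫
          ((A ⊗ V) ◁ νW) ⊗≫ (A ◁ (ψV ▷ W)) ⊗≫ (μ ▷ (V ⊗ W)) ⊗≫ 𝟙 _ := by
        rw [hp3V']
      -- now work back towards the RHS : exchange μ_a with νW
    _ = 𝟙 A ⊗≫ (A ◁ νV) ⊗≫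
          ((((α_ A A V).inv ≫ (μ ▷ V)) ▷ 𝟙_ C) ≫ ((A ⊗ V) ◁ νW)) ⊗≫
          (A ◁ (ψV ▷ W)) ⊗≫ (μ ▷ (V ⊗ W)) ⊗≫ 𝟙 _ := by monoidal
    _ = 𝟙 A ⊗≫ (A ◁ νV) ⊗≫
          (((A ⊗ (A ⊗ V)) ◁ νW) ≫
            (((α_ A A V).inv ≫ (μ ▷ V)) ▷ (A ⊗ W))) ⊗≫
          (A ◁ (ψV ▷ W)) ⊗≫ (μ ▷ (V ⊗ W)) ⊗≫ 𝟙 _ := by rw [← whisker_exchange]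
      -- exchange μ_a with ψV₁
    _ = 𝟙 A ⊗≫ (A ◁ νV) ⊗≫ ((A ⊗ (A ⊗ V)) ◁ νW) ⊗≫
          ((μ ▷ ((V ⊗ A) ⊗ W)) ≫ (A ◁ (ψV ▷ W))) ⊗≫
          (μ ▷ (V ⊗ W)) ⊗≫ 𝟙 _ := by monoidal
    _ = 𝟙 A ⊗≫ (A ◁ νV) ⊗≫ ((A ⊗ (A ⊗ V)) ◁ νW) ⊗≫
          (((A ⊗ A) ◁ (ψV ▷ W)) ≫ (μ ▷ ((A ⊗ V) ⊗ W))) ⊗≫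
          (μ ▷ (V ⊗ W)) ⊗≫ 𝟙 _ := by rw [← whisker_exchange]
      -- regroup the μ's
    _ = 𝟙 A ⊗≫ (A ◁ νV) ⊗≫ ((A ⊗ (A ⊗ V)) ◁ νW) ⊗≫
          (A ◁ (A ◁ (ψV ▷ W))) ⊗≫
          (((μ ▷ A) ≫ μ) ▷ (V ⊗ W)) ⊗≫ 𝟙 _ := by monoidal
    _ = 𝟙 A ⊗≫ (A ◁ νV) ⊗≫ ((A ⊗ (A ⊗ V)) ◁ νW) ⊗≫
          (A ◁ (A ◁ (ψV ▷ W))) ⊗≫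
          (((α_ A A A).hom ≫ (A ◁ μ) ≫ μ) ▷ (V ⊗ W)) ⊗≫ 𝟙 _ := by rw [hA22]
    _ = (ρ_ A).inv ≫
      (A ◁ ((λ_ (𝟙_ C)).inv ≫ (νV ⊗ₘ νW) ≫ (α_ A V (A ⊗ W)).hom ≫
        (A ◁ (α_ V A W).inv) ≫ (A ◁ (ψV ▷ W)) ≫ muPart V W μ)) ≫
      (α_ A A (V ⊗ W)).inv ≫ (μ ▷ (V ⊗ W)) := by
        simp only [muPart, MonoidalCategory.tensorHom_def, Category.assoc,
          comp_whiskerRight, MonoidalCategory.whiskerLeft_comp]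
        monoidal

end Core


theorem statement6 {A V W : C} (η : 𝟙_ C ⟶ A) (μ : A ⊗ A ⟶ A)
    (ψV : V ⊗ A ⟶ A ⊗ V) (σV : V ⊗ V ⟶ A ⊗ V)
    (ψW : W ⊗ A ⟶ A ⊗ W) (σW : W ⊗ W ⟶ A ⊗ W)
    (Δ : V ⊗ W ⟶ V ⊗ W) (τ : W ⊗ V ⟶ V ⊗ W)
    (hA : IsMonoid η μ) (hψV : Compat μ ψV) (hψW : Compat μ ψW)
    (htwV : Twisted μ ψV σV) (htwW : Twisted μ ψW σW)
    (hcoV : Cocycle μ ψV σV) (hcoW : Cocycle μ ψW σW)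
    (hnV : Normalized η μ ψV σV) (hnW : Normalized η μ ψW σW)
    (hΔ : IsLink η μ ψV ψW Δ)
    (hτ1 : TwistI ψV ψW τ) (hτ2 : TwistII μ ψV σV ψW σW τ)
    (hσ : SigmaCompat Δ (sigmaVW μ ψV σV σW τ))
    (νV : 𝟙_ C ⟶ A ⊗ V) (νW : 𝟙_ C ⟶ A ⊗ W)
    (hp1V : PreEq1 η μ ψV σV νV) (hp2V : PreEq2 η μ ψV σV νV)
    (hp3V : PreEq3 μ ψV νV)
    (hp1W : PreEq1 η μ ψW σW νW) (hp2W : PreEq2 η μ ψW σW νW)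
    (hp3W : PreEq3 μ ψW νW)
    (huV : IsPreunit (wmul μ ψV σV) νV) (huW : IsPreunit (wmul μ ψW σW) νW)
    (hip1 : IterPre1 η μ ψV σV ψW τ Δ νV)
    (hip2 : IterPre2 η μ ψV ψW σW τ Δ νW) :
    PreEq3 μ (psiVW ψV ψW Δ) (nuVW η μ ψV ψW Δ νV νW) := by
  have hψ2 : Compat μ (psi2 ψV ψW) := compat_psi2_s6 μ ψV ψW hψV hψW
  have hψ : Compat μ (psiVW ψV ψW Δ) := compat_psiVW μ ψV ψW Δ hψ2 hΔ.1
  have hnu : nuVW η μ ψV ψW Δ νV νW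
      = ((λ_ (𝟙_ C)).inv ≫ (νV ⊗ₘ νW) ≫ (α_ A V (A ⊗ W)).hom ≫
          (A ◁ (α_ V A W).inv) ≫ (A ◁ (ψV ▷ W)) ≫ muPart V W μ) ≫
        nabla η μ (psiVW ψV ψW Δ) := by
    simp only [nuVW, Category.assoc]
  show (λ_ A).inv ≫ (nuVW η μ ψV ψW Δ νV νW ▷ A) ≫ (α_ A (V ⊗ W) A).hom ≫
      (A ◁ psiVW ψV ψW Δ) ≫ (α_ A A (V ⊗ W)).inv ≫ (μ ▷ (V ⊗ W))
    = beta μ (nuVW η μ ψV ψW Δ νV νW)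
  calc (λ_ A).inv ≫ (nuVW η μ ψV ψW Δ νV νW ▷ A) ≫ (α_ A (V ⊗ W) A).hom ≫
      (A ◁ psiVW ψV ψW Δ) ≫ (α_ A A (V ⊗ W)).inv ≫ (μ ▷ (V ⊗ W))
      = (λ_ A).inv ≫
          (((λ_ (𝟙_ C)).inv ≫ (νV ⊗ₘ νW) ≫ (α_ A V (A ⊗ W)).hom ≫
            (A ◁ (α_ V A W).inv) ≫ (A ◁ (ψV ▷ W)) ≫ muPart V W μ) ▷ A) ≫
          ((nabla η μ (psiVW ψV ψW Δ) ▷ A) ≫ (α_ A (V ⊗ W) A).hom ≫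
            (A ◁ psiVW ψV ψW Δ) ≫ (α_ A A (V ⊗ W)).inv ≫ (μ ▷ (V ⊗ W))) := by
        rw [hnu]; simp only [comp_whiskerRight, Category.assoc]
    _ = (λ_ A).inv ≫
          (((λ_ (𝟙_ C)).inv ≫ (νV ⊗ₘ νW) ≫ (α_ A V (A ⊗ W)).hom ≫
            (A ◁ (α_ V A W).inv) ≫ (A ◁ (ψV ▷ W)) ≫ muPart V W μ) ▷ A) ≫
          ((α_ A (V ⊗ W) A).hom ≫ (A ◁ psiVW ψV ψW Δ) ≫
            (α_ A A (V ⊗ W)).inv ≫ (μ ▷ (V ⊗ W))) := by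
        rw [nabla_absorb_s6 η μ (psiVW ψV ψW Δ) hA hψ]
    _ = ((λ_ A).inv ≫
          (((λ_ (𝟙_ C)).inv ≫ (νV ⊗ₘ νW) ≫ (α_ A V (A ⊗ W)).hom ≫
            (A ◁ (α_ V A W).inv) ≫ (A ◁ (ψV ▷ W)) ≫ muPart V W μ) ▷ A) ≫
          (α_ A (V ⊗ W) A).hom ≫ (A ◁ psi2 ψV ψW) ≫
            (α_ A A (V ⊗ W)).inv ≫ (μ ▷ (V ⊗ W))) ≫
          nabla η μ (psiVW ψV ψW Δ) := by
        conv_lhs => rw [hΔ.2]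
        simp only [MonoidalCategory.whiskerLeft_comp, Category.assoc]
        rw [nabla_mul' η μ (psiVW ψV ψW Δ) hA]
    _ = ((ρ_ A).inv ≫
          (A ◁ ((λ_ (𝟙_ C)).inv ≫ (νV ⊗ₘ νW) ≫ (α_ A V (A ⊗ W)).hom ≫
            (A ◁ (α_ V A W).inv) ≫ (A ◁ (ψV ▷ W)) ≫ muPart V W μ)) ≫
          (α_ A A (V ⊗ W)).inv ≫ (μ ▷ (V ⊗ W))) ≫
          nabla η μ (psiVW ψV ψW Δ) := by
        rw [core η μ ψV ψW νV νW hA hψV hp3V hp3W]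
    _ = (ρ_ A).inv ≫
          (A ◁ ((λ_ (𝟙_ C)).inv ≫ (νV ⊗ₘ νW) ≫ (α_ A V (A ⊗ W)).hom ≫
            (A ◁ (α_ V A W).inv) ≫ (A ◁ (ψV ▷ W)) ≫ muPart V W μ)) ≫
          (A ◁ nabla η μ (psiVW ψV ψW Δ)) ≫
          (α_ A A (V ⊗ W)).inv ≫ (μ ▷ (V ⊗ W)) := by
        simp only [Category.assoc]
        rw [← nabla_mul' η μ (psiVW ψV ψW Δ) hA]
    _ = beta μ (nuVW η μ ψV ψW Δ νV νW) := by
        rw [beta, hnu]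
        simp only [MonoidalCategory.whiskerLeft_comp, Category.assoc]


end IteratedWCP
end
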